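/- Fix β>0, θ∈ℝ, s>0 and z>0, and let a:(0,∞)→(0,∞) be positive with a_t = o(t²) as t→∞ if θ=0, and a_t = o(e^{2β|θ|t}) as t→∞ if θ≠0. Then lim_{t→∞} q^θ_t(z, a_{t+s}) / q^θ_{t+s}(a_{t+s}) = e^{−2θ_− z} · z · e^{2β|θ|s}, where θ_− = max(−θ,0). (This is the pointwise density form of the local limit in the Kesten regime.) -/

import Mathlib

open MeasureTheory Filter

/-- `c^θ_t` from the paper, with time-scale parameter `β`. -/
noncomputable def cc (β θ t : ℝ) : ℝ :=
  if θ = 0 then 1 / (β * t) else 2 * θ / (Real.exp (2 * β * θ * t) - 1)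

/-- `c̃^θ_t` from the paper. -/
noncomputable def cct (β θ t : ℝ) : ℝ :=
  if θ = 0 then 1 / (β * t) else 2 * θ / (1 - Real.exp (-(2 * β * θ * t)))

/-- `u^θ(λ, t)` from the paper. -/
noncomputable def uu (β θ l t : ℝ) : ℝ :=
  if t = 0 then l else l * cc β θ t / (cct β θ t + l)

/-- entrance density `q^θ_t(x)`. -/
noncomputable def qe (β θ t x : ℝ) : ℝ :=
  cc β θ t * cct β θ t * Real.exp (-(cct β θ t * x))

/-- transition density `q^θ_t(x, y)`. -/
noncomputable def qt (β θ t x y : ℝ) : ℝ :=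
  x * cc β θ t * cct β θ t * Real.exp (-((x + y) * cc β θ t) - 2 * θ * y) *
    ∑' k : ℕ, (x * y * cc β θ t * cct β θ t) ^ k /
      ((Nat.factorial k : ℝ) * (Nat.factorial (k + 1) : ℝ))

/-- the space-time harmonic function `m^{α,θ}(t, z)`. -/
noncomputable def mm (β θ α t z : ℝ) : ℝ :=
  z * Real.exp (-(α / cc β θ t)) *
    ∑' i : ℕ, (α * z) ^ i * Real.exp (((i : ℝ) + 1) * (2 * β * θ * t)) /
      ((Nat.factorial i : ℝ) * (Nat.factorial (i + 1) : ℝ))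

/-- the space-time harmonic function `m̃^{α,θ}(t, z)`. -/
noncomputable def mmt (β θ α t z : ℝ) : ℝ :=
  z * Real.exp (2 * θ * z) * Real.exp (-(α / cct β θ t)) *
    ∑' i : ℕ, (α * z) ^ i * Real.exp (-(((i : ℝ) + 1) * (2 * β * θ * t))) /
      ((Nat.factorial i : ℝ) * (Nat.factorial (i + 1) : ℝ))

/-! ### auxiliary lemmas -/

noncomputable def SS (x : ℝ) : ℝ :=
  ∑' k : ℕ, x ^ k / ((Nat.factorial k : ℝ) * (Nat.factorial (k + 1) : ℝ))

lemma SS_term_le {x : ℝ} (hx : 0 ≤ x) (k : ℕ) :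
    x ^ k / ((Nat.factorial k : ℝ) * (Nat.factorial (k + 1) : ℝ))
      ≤ x ^ k / (Nat.factorial k : ℝ) := by
  have h1 : (0:ℝ) < (Nat.factorial k : ℝ) := by positivity
  have h2 : (Nat.factorial k : ℝ) ≤ (Nat.factorial k : ℝ) * (Nat.factorial (k+1) : ℝ) := by
    have : (1:ℝ) ≤ (Nat.factorial (k+1) : ℝ) := by
      exact_mod_cast Nat.one_le_iff_ne_zero.mpr (Nat.factorial_ne_zero _)
    nlinarith
  exact div_le_div_of_nonneg_left (by positivity) h1 h2

lemma SS_summable {x : ℝ} (hx : 0 ≤ x) :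
    Summable (fun k : ℕ => x ^ k / ((Nat.factorial k : ℝ) * (Nat.factorial (k + 1) : ℝ))) :=
  Summable.of_nonneg_of_le (fun k => by positivity) (SS_term_le hx)
    (Real.summable_pow_div_factorial x)

lemma one_le_SS {x : ℝ} (hx : 0 ≤ x) : 1 ≤ SS x := by
  have h := Summable.le_tsum (SS_summable hx) 0 (fun k _ => by positivity)
  rw [SS]
  refine le_trans (le_of_eq ?_) h
  norm_num [Nat.factorial]

lemma SS_le_exp {x : ℝ} (hx : 0 ≤ x) : SS x ≤ Real.exp x := by
  have h := Summable.tsum_le_tsum (SS_term_le hx) (SS_summable hx) (Real.summable_pow_div_factorial x)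
  have he : Real.exp x = ∑' k : ℕ, x ^ k / (Nat.factorial k : ℝ) := by
    rw [Real.exp_eq_exp_ℝ, NormedSpace.exp_eq_tsum_div]
  rw [SS, he]; exact h

lemma SS_tendsto {w : ℝ → ℝ} (hw0 : ∀ᶠ t in atTop, 0 ≤ w t)
    (hw : Tendsto w atTop (nhds 0)) :
    Tendsto (fun t => SS (w t)) atTop (nhds 1) := by
  have hup : Tendsto (fun t => Real.exp (w t)) atTop (nhds 1) := by
    simpa [Function.comp_def] using (Real.continuous_exp.tendsto 0).comp hw
  refine tendsto_of_tendsto_of_tendsto_of_le_of_le' tendsto_const_nhds hup ?_ ?_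
  · exact hw0.mono fun t ht => one_le_SS ht
  · exact hw0.mono fun t ht => SS_le_exp ht

lemma one_lt_exp_of_pos {u : ℝ} (hu : 0 < u) : 1 < Real.exp u := by
  rw [← Real.exp_zero]; exact Real.exp_lt_exp.mpr hu

lemma exp_lt_one_of_neg {u : ℝ} (hu : u < 0) : Real.exp u < 1 := by
  rw [← Real.exp_zero]; exact Real.exp_lt_exp.mpr hu

lemma cc_pos {β θ t : ℝ} (hβ : 0 < β) (ht : 0 < t) : 0 < cc β θ t := by
  unfold cc
  split_ifs with h
  · positivity
  · have hbt : 0 < β * t := mul_pos hβ ht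
    rcases lt_or_gt_of_ne h with hneg | hpos
    · have hu : 2 * β * θ * t < 0 := by nlinarith [mul_pos hbt (neg_pos.mpr hneg)]
      have := exp_lt_one_of_neg hu
      exact div_pos_of_neg_of_neg (by linarith) (by linarith)
    · have hu : 0 < 2 * β * θ * t := by nlinarith [mul_pos hbt hpos]
      have := one_lt_exp_of_pos hu
      exact div_pos (by linarith) (by linarith)

lemma cct_pos {β θ t : ℝ} (hβ : 0 < β) (ht : 0 < t) : 0 < cct β θ t := by
  unfold cct
  split_ifs with h
  · positivity
  · have hbt : 0 < β * t := mul_pos hβ ht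
    rcases lt_or_gt_of_ne h with hneg | hpos
    · have hu : 0 < -(2 * β * θ * t) := by nlinarith [mul_pos hbt (neg_pos.mpr hneg)]
      have := one_lt_exp_of_pos hu
      exact div_pos_of_neg_of_neg (by linarith) (by linarith)
    · have hu : -(2 * β * θ * t) < 0 := by nlinarith [mul_pos hbt hpos]
      have := exp_lt_one_of_neg hu
      exact div_pos (by linarith) (by linarith)

lemma exp_ne_one {u : ℝ} (hu : u ≠ 0) : Real.exp u ≠ 1 := by
  intro hc
  rw [← Real.exp_zero, Real.exp_eq_exp] at hc
  exact hu hc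

lemma cct_eq_cc_add {β θ t : ℝ} (hβ : β ≠ 0) (ht : t ≠ 0) :
    cct β θ t = cc β θ t + 2 * θ := by
  unfold cc cct
  split_ifs with h
  · simp [h]
  · have hX : 2 * β * θ * t ≠ 0 :=
      mul_ne_zero (mul_ne_zero (mul_ne_zero two_ne_zero hβ) h) ht
    have he1 : Real.exp (2 * β * θ * t) ≠ 1 := exp_ne_one hX
    have he0 : Real.exp (2 * β * θ * t) ≠ 0 := Real.exp_ne_zero _
    have hs1 : Real.exp (2 * β * θ * t) - 1 ≠ 0 := sub_ne_zero.mpr he1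
    rw [Real.exp_neg]
    have hs2 : 1 - (Real.exp (2 * β * θ * t))⁻¹ ≠ 0 := by
      rw [sub_ne_zero]
      intro hc
      exact he1 (by rw [← inv_inv (Real.exp _), ← hc, inv_one])
    have h1 : 1 - (Real.exp (2 * β * θ * t))⁻¹
        = (Real.exp (2 * β * θ * t) - 1) / Real.exp (2 * β * θ * t) := by
      field_simp
    rw [h1, div_div_eq_mul_div, div_add' _ _ _ hs1]
    congr 1
    ring

lemma cct_eq_cc_mul {β θ t : ℝ} (hθ : θ ≠ 0) :
    cct β θ t = cc β θ t * Real.exp (2 * β * θ * t) := by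
  unfold cc cct
  rw [if_neg hθ, if_neg hθ, Real.exp_neg]
  have he0 : Real.exp (2 * β * θ * t) ≠ 0 := Real.exp_ne_zero _
  have h1 : 1 - (Real.exp (2 * β * θ * t))⁻¹
      = (Real.exp (2 * β * θ * t) - 1) / Real.exp (2 * β * θ * t) := by
    field_simp
  rw [h1, div_div_eq_mul_div, div_mul_eq_mul_div]

lemma ratio_eq (β θ s z y t : ℝ) (hβ : 0 < β) (hs : 0 < s) (ht : 0 < t) :
    qt β θ t z y / qe β θ (t + s) y
      = z * (cc β θ t * cct β θ t / (cc β θ (t + s) * cct β θ (t + s)))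
        * Real.exp (-(z * cc β θ t))
        * Real.exp (-(y * (cc β θ t - cc β θ (t + s))))
        * SS (z * y * cc β θ t * cct β θ t) := by
  have hts : 0 < t + s := by linarith
  have hc' := (cc_pos (θ := θ) hβ hts).ne'
  have hd' := (cct_pos (θ := θ) hβ hts).ne'
  have hcteq := cct_eq_cc_add (β := β) (θ := θ) hβ.ne' hts.ne'
  have hexp : Real.exp (-((z + y) * cc β θ t) - 2 * θ * y)
      = Real.exp (-(z * cc β θ t)) * Real.exp (-(y * (cc β θ t - cc β θ (t + s))))
        * Real.exp (-(cct β θ (t + s) * y)) := by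
    rw [← Real.exp_add, ← Real.exp_add, hcteq]
    congr 1
    ring
  rw [qt, qe, SS, hexp]
  have hE := Real.exp_ne_zero (-(cct β θ (t + s) * y))
  field_simp

/-- Pointwise density form of the local limit in the Kesten regime: if `a` is positive with
`a_t = o(t²)` (case `θ = 0`) or `a_t = o(e^{2β|θ|t})` (case `θ ≠ 0`) as `t → ∞`, then for
`s > 0` and `z > 0`,
`q^θ_t(z, a_{t+s}) / q^θ_{t+s}(a_{t+s}) → e^{-2θ₋z} · z · e^{2β|θ|s}` as `t → ∞`. -/
theorem kesten_regime_local_limit (β θ s z : ℝ) (hβ : 0 < β) (hs : 0 < s) (hz : 0 < z)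
    (a : ℝ → ℝ) (hapos : ∀ t : ℝ, 0 < t → 0 < a t)
    (ha0 : θ = 0 → Filter.Tendsto (fun t => a t / t ^ 2) Filter.atTop (nhds 0))
    (ha1 : θ ≠ 0 →
      Filter.Tendsto (fun t => a t / Real.exp (2 * β * |θ| * t)) Filter.atTop (nhds 0)) :
    Filter.Tendsto (fun t => qt β θ t z (a (t + s)) / qe β θ (t + s) (a (t + s)))
      Filter.atTop
      (nhds (Real.exp (-(2 * max (-θ) 0 * z)) * z * Real.exp (2 * β * |θ| * s))) := by
  have hshift : Tendsto (fun t : ℝ => t + s) atTop atTop :=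
    tendsto_atTop_add_const_right atTop s tendsto_id
  have H : Tendsto (fun t => cc β θ t * cct β θ t / (cc β θ (t+s) * cct β θ (t+s)))
        atTop (nhds (Real.exp (2 * β * |θ| * s)))
      ∧ Tendsto (fun t => cc β θ t) atTop (nhds (2 * max (-θ) 0))
      ∧ Tendsto (fun t => a (t+s) * (cc β θ t - cc β θ (t+s))) atTop (nhds 0)
      ∧ Tendsto (fun t => z * a (t+s) * cc β θ t * cct β θ t) atTop (nhds 0) := by
    rcases eq_or_ne θ 0 with h0 | hθ
    · -- θ = 0
      subst h0
      have hccf : ∀ t : ℝ, cc β 0 t = 1 / (β * t) := fun t => if_pos rfl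
      have hcctf : ∀ t : ℝ, cct β 0 t = 1 / (β * t) := fun t => if_pos rfl
      have hεf : Tendsto (fun t => a (t+s) / (t+s)^2) atTop (nhds 0) := by
        have := (ha0 rfl).comp hshift
        simpa [Function.comp_def] using this
      have hfrac : Tendsto (fun t : ℝ => (t+s)/t) atTop (nhds 1) := by
        have h2 := (tendsto_inv_atTop_zero : Tendsto (fun x : ℝ => x⁻¹) atTop (nhds 0)).const_mul s
        rw [mul_zero] at h2
        have h' : Tendsto (fun t : ℝ => 1 + s * t⁻¹) atTop (nhds 1) := by
          simpa using (tendsto_const_nhds (x := (1:ℝ)) (f := atTop)).add h2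
        refine Tendsto.congr' ?_ h'
        filter_upwards [eventually_gt_atTop (0:ℝ)] with t ht
        field_simp
      have hcc0 : Tendsto (fun t => cc β 0 t) atTop (nhds 0) := by
        have hbt : Tendsto (fun t : ℝ => β * t) atTop atTop :=
          Tendsto.const_mul_atTop hβ tendsto_id
        have h2 : Tendsto (fun t : ℝ => (β * t)⁻¹) atTop (nhds 0) :=
          hbt.inv_tendsto_atTop
        refine Tendsto.congr (fun t => ?_) h2
        rw [hccf t, one_div]
      refine ⟨?_, ?_, ?_, ?_⟩
      · have h' : Tendsto (fun t : ℝ => ((t+s)/t)^2) atTop (nhds 1) := by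
          simpa using hfrac.pow 2
        rw [show (2 * β * |(0:ℝ)| * s) = 0 by simp, Real.exp_zero]
        refine Tendsto.congr' ?_ h'
        filter_upwards [eventually_gt_atTop (0:ℝ)] with t ht
        have hts : (0:ℝ) < t + s := by linarith
        rw [hccf t, hcctf t, hccf (t+s), hcctf (t+s)]
        field_simp
      · simpa using hcc0
      · have h' := hεf.mul (hfrac.const_mul (s/β))
        simp only [zero_mul, mul_one] at h'
        refine Tendsto.congr' ?_ h'
        filter_upwards [eventually_gt_atTop (0:ℝ)] with t ht
        have hts : (0:ℝ) < t + s := by linarith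
        rw [hccf t, hccf (t+s)]
        field_simp
        ring
      · have h' := hεf.mul ((hfrac.pow 2).const_mul (z/β^2))
        simp only [zero_mul, one_pow, mul_one] at h'
        refine Tendsto.congr' ?_ h'
        filter_upwards [eventually_gt_atTop (0:ℝ)] with t ht
        have hts : (0:ℝ) < t + s := by linarith
        rw [hccf t, hcctf t]
        field_simp
    · -- θ ≠ 0
      have hccf : ∀ t : ℝ, cc β θ t = 2*θ/(Real.exp (2*β*θ*t) - 1) := fun t => if_neg hθ
      have hθ2 : (2:ℝ)*θ ≠ 0 := mul_ne_zero two_ne_zero hθ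
      have hXne : ∀ t : ℝ, t ≠ 0 → 2*β*θ*t ≠ 0 := fun t ht =>
        mul_ne_zero (mul_ne_zero (mul_ne_zero two_ne_zero hβ.ne') hθ) ht
      have hadd : ∀ t : ℝ, Real.exp (2*β*θ*(t+s))
          = Real.exp (2*β*θ*t) * Real.exp (2*β*θ*s) := by
        intro t
        rw [← Real.exp_add]
        congr 1
        ring
      have hdr : ∀ t : ℝ, cct β θ t / cct β θ (t+s)
          = (cc β θ t / cc β θ (t+s)) * Real.exp (-(2*β*θ*s)) := by
        intro t
        rw [cct_eq_cc_mul hθ, cct_eq_cc_mul hθ, mul_div_mul_comm, ← Real.exp_sub]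
        congr 2
        ring
      rcases hθ.lt_or_gt with hneg | hpos
      · -- θ < 0
        have habs : |θ| = -θ := abs_of_neg hneg
        have hXneg : 2*β*θ < 0 := by nlinarith
        have hE0 : Tendsto (fun t : ℝ => Real.exp (2*β*θ*t)) atTop (nhds 0) :=
          Real.tendsto_exp_atBot.comp ((tendsto_const_mul_atBot_of_neg hXneg).mpr tendsto_id)
        have hE0' : Tendsto (fun t : ℝ => Real.exp (2*β*θ*(t+s))) atTop (nhds 0) :=
          Real.tendsto_exp_atBot.comp ((tendsto_const_mul_atBot_of_neg hXneg).mpr hshift)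
        have hcc : Tendsto (fun t => cc β θ t) atTop (nhds (-(2*θ))) := by
          have h' : Tendsto (fun t : ℝ => 2*θ/(Real.exp (2*β*θ*t) - 1)) atTop
              (nhds (2*θ/(0-1))) :=
            tendsto_const_nhds.div ((hE0.sub_const 1)) (by norm_num)
          rw [show (2*θ/((0:ℝ)-1)) = -(2*θ) by ring] at h'
          exact Tendsto.congr (fun t => (hccf t).symm) h'
        have hcc' : Tendsto (fun t => cc β θ (t+s)) atTop (nhds (-(2*θ))) := by
          have := hcc.comp hshift
          simpa [Function.comp_def] using this
        have hm2θ : -(2*θ) ≠ 0 := by simpa using hθ2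
        have hcr : Tendsto (fun t => cc β θ t / cc β θ (t+s)) atTop (nhds 1) := by
          have := hcc.div hcc' hm2θ
          simpa [div_self hm2θ, Pi.div_def] using this
        have hεraw : Tendsto (fun t => a (t+s) / Real.exp (2 * β * |θ| * (t+s)))
            atTop (nhds 0) := by
          have h' := (ha1 hθ).comp hshift
          simpa [Function.comp_def] using h'
        have hεf : Tendsto (fun t => a (t+s) * Real.exp (2*β*θ*(t+s))) atTop (nhds 0) := by
          refine Tendsto.congr (fun t => ?_) hεraw
          rw [habs, show (2 * β * -θ * (t+s)) = -(2*β*θ*(t+s)) by ring, Real.exp_neg,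
            div_eq_mul_inv, inv_inv]
        have hden : Tendsto
            (fun t => ((Real.exp (2*β*θ*t) - 1) * (Real.exp (2*β*θ*(t+s)) - 1))⁻¹)
            atTop (nhds 1) := by
          have := ((hE0.sub_const 1).mul (hE0'.sub_const 1)).inv₀ (by norm_num)
          simpa using this
        refine ⟨?_, ?_, ?_, ?_⟩
        · have h' := hcr.mul (hcr.mul_const (Real.exp (-(2*β*θ*s))))
          rw [show ((1:ℝ) * (1 * Real.exp (-(2*β*θ*s)))) = Real.exp (2 * β * |θ| * s) by
            rw [habs]; ring_nf] at h'
          refine Tendsto.congr (fun t => ?_) h'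
          rw [mul_div_mul_comm, hdr t]
        · rw [show (2 * max (-θ) 0) = -(2*θ) by
            rw [max_eq_left (by linarith : (0:ℝ) ≤ -θ)]; ring]
          exact hcc
        · have h' := (hεf.mul_const
            (2*θ*Real.exp (-(2*β*θ*s))*(Real.exp (2*β*θ*s)-1))).mul hden
          simp only [zero_mul, mul_one] at h'
          refine Tendsto.congr' ?_ h'
          filter_upwards [eventually_gt_atTop (0:ℝ)] with t ht
          have hts : (0:ℝ) < t + s := by linarith
          have hs1 : Real.exp (2*β*θ*t) - 1 ≠ 0 :=
            sub_ne_zero.mpr (exp_ne_one (hXne t ht.ne'))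
          have hs2 : Real.exp (2*β*θ*(t+s)) - 1 ≠ 0 :=
            sub_ne_zero.mpr (exp_ne_one (hXne (t+s) hts.ne'))
          rw [hccf t, hccf (t+s), hadd t, Real.exp_neg] at *
          have hF : Real.exp (2*β*θ*s) ≠ 0 := Real.exp_ne_zero _
          rw [div_sub_div _ _ hs1 hs2]
          field_simp
          ring
        · have h' := ((hεf.mul_const (Real.exp (-(2*β*θ*s)))).const_mul z).mul
            (hcc.mul hcc)
          simp only [zero_mul, mul_zero] at h'
          refine Tendsto.congr (fun t => ?_) h'
          have hEE : Real.exp (2*β*θ*(t+s)) * Real.exp (-(2*β*θ*s))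
              = Real.exp (2*β*θ*t) := by
            rw [← Real.exp_add]
            congr 1
            ring
          rw [cct_eq_cc_mul hθ, ← hEE]
          ring
      · -- θ > 0
        have habs : |θ| = θ := abs_of_pos hpos
        have hXpos : 0 < 2*β*θ := by nlinarith
        have hEtop : Tendsto (fun t : ℝ => Real.exp (2*β*θ*t)) atTop atTop :=
          Real.tendsto_exp_atTop.comp (Tendsto.const_mul_atTop hXpos tendsto_id)
        have hE1top : Tendsto (fun t : ℝ => Real.exp (2*β*θ*t) - 1) atTop atTop := by
          simpa [sub_eq_add_neg] using tendsto_atTop_add_const_right atTop (-1) hEtop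
        have hinv : Tendsto (fun t : ℝ => (Real.exp (2*β*θ*t) - 1)⁻¹) atTop (nhds 0) :=
          hE1top.inv_tendsto_atTop
        have hcc0 : Tendsto (fun t => cc β θ t) atTop (nhds 0) := by
          have := hinv.const_mul (2*θ)
          rw [mul_zero] at this
          refine Tendsto.congr (fun t => ?_) this
          rw [hccf t, div_eq_mul_inv]
        have hratio1 : Tendsto (fun t : ℝ => Real.exp (2*β*θ*t)/(Real.exp (2*β*θ*t)-1))
            atTop (nhds 1) := by
          have h' := hinv.const_add (1:ℝ)
          rw [add_zero] at h'
          refine Tendsto.congr' ?_ h'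
          filter_upwards [eventually_gt_atTop (0:ℝ)] with t ht
          have hs1 : Real.exp (2*β*θ*t) - 1 ≠ 0 :=
            sub_ne_zero.mpr (exp_ne_one (hXne t ht.ne'))
          field_simp
          ring
        have hratio1' : Tendsto
            (fun t : ℝ => Real.exp (2*β*θ*(t+s))/(Real.exp (2*β*θ*(t+s))-1))
            atTop (nhds 1) := by
          have := hratio1.comp hshift
          simpa [Function.comp_def] using this
        have hcr : Tendsto (fun t => cc β θ t / cc β θ (t+s)) atTop
            (nhds (Real.exp (2*β*θ*s))) := by
          have h' := (hinv.const_mul (Real.exp (2*β*θ*s) - 1)).const_add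
            (Real.exp (2*β*θ*s))
          rw [mul_zero, add_zero] at h'
          refine Tendsto.congr' ?_ h'
          filter_upwards [eventually_gt_atTop (0:ℝ)] with t ht
          have hts : (0:ℝ) < t + s := by linarith
          have hs1 : Real.exp (2*β*θ*t) - 1 ≠ 0 :=
            sub_ne_zero.mpr (exp_ne_one (hXne t ht.ne'))
          have hs2 : Real.exp (2*β*θ*(t+s)) - 1 ≠ 0 :=
            sub_ne_zero.mpr (exp_ne_one (hXne (t+s) hts.ne'))
          rw [hccf t, hccf (t+s), hadd t] at *
          field_simp
          ring
        have hεf : Tendsto (fun t => a (t+s) / Real.exp (2*β*θ*(t+s))) atTop (nhds 0) := by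
          have := (ha1 hθ).comp hshift
          simpa [Function.comp_def, habs] using this
        have hac : Tendsto (fun t => a (t+s) * cc β θ t) atTop (nhds 0) := by
          have h' := (hεf.mul_const (2*θ*Real.exp (2*β*θ*s))).mul hratio1
          simp only [zero_mul, mul_one] at h'
          refine Tendsto.congr' ?_ h'
          filter_upwards [eventually_gt_atTop (0:ℝ)] with t ht
          have hs1 : Real.exp (2*β*θ*t) - 1 ≠ 0 :=
            sub_ne_zero.mpr (exp_ne_one (hXne t ht.ne'))
          rw [hccf t, hadd t] at *
          have hE0 : Real.exp (2*β*θ*t) ≠ 0 := Real.exp_ne_zero _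
          have hF0 : Real.exp (2*β*θ*s) ≠ 0 := Real.exp_ne_zero _
          field_simp
        have hac' : Tendsto (fun t => a (t+s) * cc β θ (t+s)) atTop (nhds 0) := by
          have h' := (hεf.mul_const (2*θ)).mul hratio1'
          simp only [zero_mul, mul_one] at h'
          refine Tendsto.congr' ?_ h'
          filter_upwards [eventually_gt_atTop (0:ℝ)] with t ht
          have hts : (0:ℝ) < t + s := by linarith
          have hs2 : Real.exp (2*β*θ*(t+s)) - 1 ≠ 0 :=
            sub_ne_zero.mpr (exp_ne_one (hXne (t+s) hts.ne'))
          rw [hccf (t+s)] at *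
          have hE0 : Real.exp (2*β*θ*(t+s)) ≠ 0 := Real.exp_ne_zero _
          field_simp
        have hdt : Tendsto (fun t => cct β θ t) atTop (nhds (2*θ)) := by
          have := hratio1.const_mul (2*θ)
          rw [mul_one] at this
          refine Tendsto.congr (fun t => ?_) this
          rw [cct_eq_cc_mul hθ, hccf t]
          ring
        refine ⟨?_, ?_, ?_, ?_⟩
        · have h' := hcr.mul (hcr.mul_const (Real.exp (-(2*β*θ*s))))
          rw [show (Real.exp (2*β*θ*s) * (Real.exp (2*β*θ*s) * Real.exp (-(2*β*θ*s))))
              = Real.exp (2 * β * |θ| * s) by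
            rw [habs, Real.exp_neg, mul_inv_cancel₀ (Real.exp_ne_zero _), mul_one]] at h'
          refine Tendsto.congr (fun t => ?_) h'
          rw [mul_div_mul_comm, hdr t]
        · rw [show (2 * max (-θ) 0) = 0 by
            rw [max_eq_right (by linarith : -θ ≤ (0:ℝ))]; ring]
          exact hcc0
        · have h' := hac.sub hac'
          rw [sub_zero] at h'
          refine Tendsto.congr (fun t => ?_) h'
          ring
        · have h' := (hac.const_mul z).mul hdt
          simp only [mul_zero, zero_mul] at h'
          refine Tendsto.congr (fun t => ?_) h'
          ring
  obtain ⟨h1, h2, h3, h4⟩ := H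
  have hw0 : ∀ᶠ t in atTop, 0 ≤ z * a (t+s) * cc β θ t * cct β θ t := by
    filter_upwards [eventually_gt_atTop (0:ℝ)] with t ht
    have hts : (0:ℝ) < t + s := by linarith
    exact le_of_lt (mul_pos (mul_pos (mul_pos hz (hapos (t+s) hts))
      (cc_pos hβ ht)) (cct_pos hβ ht))
  have hSS := SS_tendsto hw0 h4
  have hB : Tendsto (fun t => Real.exp (-(z * cc β θ t))) atTop
      (nhds (Real.exp (-(z * (2 * max (-θ) 0))))) :=
    (Real.continuous_exp.tendsto _).comp ((h2.const_mul z).neg)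
  have hC : Tendsto (fun t => Real.exp (-(a (t+s) * (cc β θ t - cc β θ (t+s)))))
      atTop (nhds 1) := by
    have := (Real.continuous_exp.tendsto _).comp h3.neg
    simpa [Function.comp_def] using this
  have hmain := (((h1.const_mul z).mul hB).mul hC).mul hSS
  rw [show (z * Real.exp (2 * β * |θ| * s) * Real.exp (-(z * (2 * max (-θ) 0))) * 1 * 1)
      = Real.exp (-(2 * max (-θ) 0 * z)) * z * Real.exp (2 * β * |θ| * s) by
    rw [show -(z * (2 * max (-θ) 0)) = -(2 * max (-θ) 0 * z) by ring]; ring] at hmain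
  refine Tendsto.congr' ?_ hmain
  filter_upwards [eventually_gt_atTop (0:ℝ)] with t ht
  exact (ratio_eq β θ s z (a (t+s)) t hβ hs ht).symm
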